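/- For every finite DAG G and all k, r, g ∈ ℤ⁺ with r ≥ Δ_in+1: the optimal MPP cost with 1 processor and memory bound k·r is at most k times the optimal MPP cost with k processors and memory bound r per processor; that is, OPT^(1)(memory k·r) ≤ k · OPT^(k)(memory r), equivalently OPT^(k)/OPT^(1) ≥ 1/k in the fair comparison. -/

import Mathlib

open scoped Classical

/-- A relation is a DAG edge relation if its transitive closure is irreflexive
(i.e., the directed graph is acyclic). -/
def IsDag {V : Type*} (E : V → V → Prop) : Prop := Irreflexive (Relation.TransGen E)

namespace MPP

variable {V : Type*} [DecidableEq V] {k : ℕ}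

/-- A configuration of multiprocessor red-blue pebbling: a set of red pebbles
for each of the `k` processors, and a set of blue pebbles. -/
structure Conf (V : Type*) (k : ℕ) where
  red : Fin k → Finset V
  blue : Finset V

/-- Moves of multiprocessor red-blue pebbling. `save`/`load` are the parallel I/O
moves (R1-M)/(R2-M), `compute` is (R3-M), and the removals are (R4-M). -/
inductive Move (V : Type*) (k : ℕ) where
  | save (m : ℕ) (f : Fin m → Fin k) (v : Fin m → V)
  | load (m : ℕ) (f : Fin m → Fin k) (v : Fin m → V)
  | compute (m : ℕ) (f : Fin m → Fin k) (v : Fin m → V)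
  | removeRed (j : Fin k) (x : V)
  | removeBlue (x : V)

/-- Add, for each `i`, the node `v i` to the red pebbles of processor `f i`. -/
def addRed (C : Conf V k) {m : ℕ} (f : Fin m → Fin k) (v : Fin m → V) :
    Fin k → Finset V :=
  fun j => C.red j ∪ (Finset.univ.filter (fun i => f i = j)).image v

/-- The effect of a move on a configuration. -/
def apply : Move V k → Conf V k → Conf V k
  | .save _ _ v, C => ⟨C.red, C.blue ∪ Finset.univ.image v⟩
  | .load _ f v, C => ⟨addRed C f v, C.blue⟩
  | .compute _ f v, C => ⟨addRed C f v, C.blue⟩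
  | .removeRed j x, C => ⟨Function.update C.red j (C.red j \ {x}), C.blue⟩
  | .removeBlue x, C => ⟨C.red, C.blue \ {x}⟩

/-- When a move may legally be performed in a given configuration. -/
def Legal (E : V → V → Prop) : Conf V k → Move V k → Prop
  | C, .save m f v => m ≤ k ∧ Function.Injective f ∧ ∀ i, v i ∈ C.red (f i)
  | C, .load m f v => m ≤ k ∧ Function.Injective f ∧ ∀ i, v i ∈ C.blue
  | C, .compute m f v =>
      m ≤ k ∧ Function.Injective f ∧ ∀ i, ∀ u, E u (v i) → u ∈ C.red (f i)
  | _, .removeRed _ _ => True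
  | _, .removeBlue _ => True

/-- A configuration respects the fast-memory bound `r` for every processor. -/
def Valid (r : ℕ) (C : Conf V k) : Prop := ∀ j, (C.red j).card ≤ r

/-- `Run E r C ms C'` : starting from configuration `C`, the list of moves `ms`
may be legally executed (respecting the memory bound `r` throughout) and leads
to configuration `C'`. -/
inductive Run (E : V → V → Prop) (r : ℕ) : Conf V k → List (Move V k) → Conf V k → Prop
  | nil (C : Conf V k) : Run E r C [] C
  | cons {C C'' : Conf V k} {mv : Move V k} {ms : List (Move V k)} :
      Legal E C mv → Valid r (apply mv C) → Run E r (apply mv C) ms C'' →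
      Run E r C (mv :: ms) C''

/-- Cost of a single move: `g` for I/O, `1` for compute, `0` for removal. -/
def moveCost (g : ℕ) : Move V k → ℕ
  | .save .. => g
  | .load .. => g
  | .compute .. => 1
  | .removeRed .. => 0
  | .removeBlue .. => 0

/-- Total cost of a sequence of moves. -/
def cost (g : ℕ) (ms : List (Move V k)) : ℕ := (ms.map (moveCost g)).sum

def isIO : Move V k → Bool
  | .save .. => true
  | .load .. => true
  | _ => false

/-- The number of I/O moves in a sequence of moves. -/
def ioCount (ms : List (Move V k)) : ℕ := (ms.filter isIO).length

def isCompute : Move V k → Bool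
  | .compute .. => true
  | _ => false

/-- The number of compute moves in a sequence of moves. -/
def computeCount (ms : List (Move V k)) : ℕ := (ms.filter isCompute).length

/-- A sink of the DAG: a node with no outgoing edge. -/
def IsSink (E : V → V → Prop) (v : V) : Prop := ∀ u, ¬ E v u

/-- A terminal configuration: every sink carries at least one pebble. -/
def Terminal (E : V → V → Prop) (C : Conf V k) : Prop :=
  ∀ v, IsSink E v → v ∈ C.blue ∨ ∃ j, v ∈ C.red j

/-- The initial (all-empty) configuration. -/
def init (V : Type*) (k : ℕ) : Conf V k := ⟨fun _ => ∅, ∅⟩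

/-- `ms` is a pebbling strategy: a legal run from the empty configuration ending
in a terminal configuration. -/
def IsPebbling (E : V → V → Prop) (r : ℕ) (ms : List (Move V k)) : Prop :=
  ∃ Cf, Run E r (init V k) ms Cf ∧ Terminal E Cf

/-- The optimal (minimum) cost of a pebbling strategy with `k` processors,
memory bound `r` per processor, and I/O cost `g`. -/
noncomputable def optCost (E : V → V → Prop) (k r g : ℕ) : ℕ :=
  sInf {c | ∃ ms : List (Move V k), IsPebbling E r ms ∧ cost g ms = c}

/-- The minimum number of I/O moves among all minimum-cost pebbling strategies. -/
noncomputable def optIO (E : V → V → Prop) (k r g : ℕ) : ℕ :=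
  sInf {q | ∃ ms : List (Move V k),
    IsPebbling E r ms ∧ cost g ms = optCost E k r g ∧ ioCount ms = q}

/-- The maximum in-degree `Δ_in` of the DAG. -/
noncomputable def maxInDeg (E : V → V → Prop) [Fintype V] : ℕ :=
  Finset.univ.sup fun v => (Finset.univ.filter fun u => E u v).card

/-- The set of nodes computed by a move. -/
def computes : Move V k → Set V
  | .compute _ _ v => Set.range v
  | _ => ∅

/-- `x` is computed by the move at position `s` of `ms`. -/
def ComputedAt (ms : List (Move V k)) (s : ℕ) (x : V) : Prop :=
  ∃ mv, ms[s]? = some mv ∧ x ∈ computes mv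

/-- The set of nodes computed by some move strictly before position `t`. -/
def computedBefore (ms : List (Move V k)) (t : ℕ) : Set V :=
  {x | ∃ s < t, ComputedAt ms s x}

/-- `x` is ready at position `t`: it has not yet been computed, but all its
in-neighbors have been. -/
def Ready (E : V → V → Prop) (ms : List (Move V k)) (t : ℕ) (x : V) : Prop :=
  x ∉ computedBefore ms t ∧ ∀ u, E u x → u ∈ computedBefore ms t

/-- The number of nodes that are ready at position `t`. -/
noncomputable def readyCount (E : V → V → Prop) [Fintype V]
    (ms : List (Move V k)) (t : ℕ) : ℕ :=
  (Finset.univ.filter (Ready E ms t)).card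

end MPP


namespace MPP

section Aux

variable {V : Type} [Fintype V] [DecidableEq V] {k : ℕ} {E : V → V → Prop} {r g : ℕ}

lemma conf_ext {C D : Conf V k} (h1 : C.red = D.red) (h2 : C.blue = D.blue) : C = D := by
  cases C; cases D; cases h1; cases h2; rfl

lemma run_append {C C' C'' : Conf V k} {l l' : List (Move V k)}
    (h : Run E r C l C') (h' : Run E r C' l' C'') : Run E r C (l ++ l') C'' := by
  induction h with
  | nil => simpa
  | cons hleg hval _ ih => exact Run.cons hleg hval (ih h')

lemma cost_append (l l' : List (Move V k)) : cost g (l ++ l') = cost g l + cost g l' := by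
  simp [cost]

lemma cost_cons (mv : Move V k) (l : List (Move V k)) :
    cost g (mv :: l) = moveCost g mv + cost g l := by simp [cost]

lemma cost_map {α : Type} (l : List α) (f : α → Move V k) (c : ℕ)
    (h : ∀ u, moveCost g (f u) = c) : cost g (l.map f) = l.length * c := by
  induction l with
  | nil => simp [cost]
  | cons a t ih => rw [List.map_cons, cost_cons, ih, h, List.length_cons]; ring

lemma union_singleton' {s : Finset V} {a : V} : s ∪ {a} = insert a s := by
  ext x; simp [or_comm]

lemma addRed_single (C : Conf V k) (j0 : Fin k) (u : V) :
    addRed C (fun _ : Fin 1 => j0) (fun _ => u)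
      = Function.update C.red j0 (insert u (C.red j0)) := by
  funext j; ext x
  by_cases h : j = j0
  · subst h
    simp [addRed, Function.update_self, Fin.exists_fin_one, eq_comm (a := u)]
  · simp [addRed, Function.update_of_ne h, Fin.exists_fin_one,
      show j0 ≠ j from fun hh => h hh.symm]

lemma injective_one {j0 : Fin k} : Function.Injective (fun _ : Fin 1 => j0) :=
  fun a b _ => Subsingleton.elim a b

lemma run_saves (j0 : Fin k) :
    ∀ (l : List V) (D : Conf V k), Valid r D → (∀ u ∈ l, u ∈ D.red j0) →
    Run E r D (l.map fun u => Move.save 1 (fun _ => j0) (fun _ => u))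
      ⟨D.red, D.blue ∪ l.toFinset⟩
  | [], D, _, _ => by simpa using Run.nil D
  | u :: t, D, hD, hmem => by
      have happ : apply (Move.save 1 (fun _ => j0) (fun _ => u)) D
          = ⟨D.red, insert u D.blue⟩ := by
        refine conf_ext rfl ?_
        show D.blue ∪ Finset.univ.image (fun _ : Fin 1 => u) = insert u D.blue
        rw [Finset.image_const Finset.univ_nonempty, union_singleton']
      have hleg : Legal E D (Move.save 1 (fun _ => j0) (fun _ => u)) :=
        ⟨j0.pos, injective_one, fun _ => hmem u (List.mem_cons_self)⟩
      have ih := run_saves j0 t ⟨D.red, insert u D.blue⟩ hD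
        (fun x hx => hmem x (List.mem_cons_of_mem _ hx))
      have heq : (⟨D.red, insert u D.blue ∪ t.toFinset⟩ : Conf V k)
          = ⟨D.red, D.blue ∪ (u :: t).toFinset⟩ := by
        refine conf_ext rfl ?_
        simp [Finset.insert_union, Finset.union_insert]
      rw [List.map_cons]
      exact Run.cons hleg (by rw [happ]; exact hD) (by rw [happ, ← heq]; exact ih)

lemma run_loads (j0 : Fin k) :
    ∀ (l : List V) (D : Conf V k), Valid r D → (∀ u ∈ l, u ∈ D.blue) →
    (D.red j0 ∪ l.toFinset).card ≤ r →
    Run E r D (l.map fun u => Move.load 1 (fun _ => j0) (fun _ => u))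
      ⟨Function.update D.red j0 (D.red j0 ∪ l.toFinset), D.blue⟩
  | [], D, _, _, _ => by simpa using Run.nil D
  | u :: t, D, hD, hblue, hcard => by
      have happ : apply (Move.load 1 (fun _ => j0) (fun _ => u)) D
          = ⟨Function.update D.red j0 (insert u (D.red j0)), D.blue⟩ :=
        conf_ext (addRed_single D j0 u) rfl
      set D' : Conf V k := ⟨Function.update D.red j0 (insert u (D.red j0)), D.blue⟩ with hD'def
      have hsub : insert u (D.red j0) ⊆ D.red j0 ∪ (u :: t).toFinset := by
        intro x hx
        rcases Finset.mem_insert.1 hx with h | h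
        · subst h; exact Finset.mem_union_right _ (by simp)
        · exact Finset.mem_union_left _ h
      have hD' : Valid r D' := by
        intro j
        by_cases h : j = j0
        · subst h
          simpa [hD'def, Function.update_self] using
            le_trans (Finset.card_le_card hsub) hcard
        · simpa [hD'def, Function.update_of_ne h] using hD j
      have hset : D'.red j0 ∪ t.toFinset = D.red j0 ∪ (u :: t).toFinset := by
        simp only [hD'def, Function.update_self]
        ext x; simp <;> tauto
      have ih := run_loads j0 t D' hD'
        (fun x hx => hblue x (List.mem_cons_of_mem _ hx)) (by rw [hset]; exact hcard)
      have hleg : Legal E D (Move.load 1 (fun _ => j0) (fun _ => u)) :=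
        ⟨j0.pos, injective_one, fun _ => hblue u (List.mem_cons_self)⟩
      have heq : (⟨Function.update D'.red j0 (D'.red j0 ∪ t.toFinset), D'.blue⟩ : Conf V k)
          = ⟨Function.update D.red j0 (D.red j0 ∪ (u :: t).toFinset), D.blue⟩ := by
        refine conf_ext ?_ rfl
        rw [hset, hD'def]
        simp [Function.update_idem]
      rw [List.map_cons]
      exact Run.cons hleg (by rw [happ]; exact hD') (by rw [happ, ← heq]; exact ih)

lemma run_computes (j0 : Fin k) :
    ∀ (l : List V) (D : Conf V k), Valid r D → (∀ u ∈ l, ∀ w, E w u → w ∈ D.red j0) →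
    (D.red j0 ∪ l.toFinset).card ≤ r →
    Run E r D (l.map fun u => Move.compute 1 (fun _ => j0) (fun _ => u))
      ⟨Function.update D.red j0 (D.red j0 ∪ l.toFinset), D.blue⟩
  | [], D, _, _, _ => by simpa using Run.nil D
  | u :: t, D, hD, hnbr, hcard => by
      have happ : apply (Move.compute 1 (fun _ => j0) (fun _ => u)) D
          = ⟨Function.update D.red j0 (insert u (D.red j0)), D.blue⟩ :=
        conf_ext (addRed_single D j0 u) rfl
      set D' : Conf V k := ⟨Function.update D.red j0 (insert u (D.red j0)), D.blue⟩ with hD'def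
      have hsub : insert u (D.red j0) ⊆ D.red j0 ∪ (u :: t).toFinset := by
        intro x hx
        rcases Finset.mem_insert.1 hx with h | h
        · subst h; exact Finset.mem_union_right _ (by simp)
        · exact Finset.mem_union_left _ h
      have hD' : Valid r D' := by
        intro j
        by_cases h : j = j0
        · subst h
          simpa [hD'def, Function.update_self] using
            le_trans (Finset.card_le_card hsub) hcard
        · simpa [hD'def, Function.update_of_ne h] using hD j
      have hset : D'.red j0 ∪ t.toFinset = D.red j0 ∪ (u :: t).toFinset := by
        simp only [hD'def, Function.update_self]
        ext x; simp <;> tauto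
      have ih := run_computes j0 t D' hD'
        (fun x hx w hw => by
          have := hnbr x (List.mem_cons_of_mem _ hx) w hw
          simp only [hD'def, Function.update_self]
          exact Finset.mem_insert_of_mem this)
        (by rw [hset]; exact hcard)
      have hleg : Legal E D (Move.compute 1 (fun _ => j0) (fun _ => u)) :=
        ⟨j0.pos, injective_one, fun _ w hw => hnbr u (List.mem_cons_self) w hw⟩
      have heq : (⟨Function.update D'.red j0 (D'.red j0 ∪ t.toFinset), D'.blue⟩ : Conf V k)
          = ⟨Function.update D.red j0 (D.red j0 ∪ (u :: t).toFinset), D.blue⟩ := by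
        refine conf_ext ?_ rfl
        rw [hset, hD'def]
        simp [Function.update_idem]
      rw [List.map_cons]
      exact Run.cons hleg (by rw [happ]; exact hD') (by rw [happ, ← heq]; exact ih)

lemma run_removes (j0 : Fin k) :
    ∀ (l : List V) (D : Conf V k), Valid r D →
    Run E r D (l.map (Move.removeRed j0))
      ⟨Function.update D.red j0 (D.red j0 \ l.toFinset), D.blue⟩
  | [], D, _ => by simpa using Run.nil D
  | u :: t, D, hD => by
      have happ : apply (Move.removeRed j0 u) D
          = ⟨Function.update D.red j0 (D.red j0 \ {u}), D.blue⟩ := rfl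
      set D' : Conf V k := ⟨Function.update D.red j0 (D.red j0 \ {u}), D.blue⟩ with hD'def
      have hD' : Valid r D' := by
        intro j
        by_cases h : j = j0
        · subst h
          simpa [hD'def, Function.update_self] using
            le_trans (Finset.card_le_card (Finset.sdiff_subset)) (hD j)
        · simpa [hD'def, Function.update_of_ne h] using hD j
      have ih := run_removes j0 t D' hD'
      have hset : D'.red j0 \ t.toFinset = D.red j0 \ (u :: t).toFinset := by
        simp only [hD'def, Function.update_self]
        ext x; simp <;> tauto
      have heq : (⟨Function.update D'.red j0 (D'.red j0 \ t.toFinset), D'.blue⟩ : Conf V k)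
          = ⟨Function.update D.red j0 (D.red j0 \ (u :: t).toFinset), D.blue⟩ := by
        refine conf_ext ?_ rfl
        rw [hset, hD'def]
        simp [Function.update_idem]
      rw [List.map_cons]
      exact Run.cons trivial (by rw [happ]; exact hD') (by rw [happ, ← heq]; exact ih)

lemma exists_pebbling (hdag : IsDag E) (hk : 0 < k) (hr : maxInDeg E + 1 ≤ r) :
    ∃ ms : List (Move V k), IsPebbling E r ms := by
  haveI : IsTrans V (Relation.TransGen E) := ⟨fun _ _ _ => Relation.TransGen.trans⟩
  haveI : IsIrrefl V (Relation.TransGen E) := ⟨hdag⟩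
  have hwf : WellFounded (Relation.TransGen E) :=
    Finite.wellFounded_of_trans_of_irrefl (α := V) _
  set j0 : Fin k := ⟨0, hk⟩ with hj0
  have key : ∀ n (S : Finset V), (Finset.univ \ S).card ≤ n →
      ∃ ms : List (Move V k),
        Run E r ⟨fun _ => ∅, S⟩ ms ⟨fun _ => ∅, (Finset.univ : Finset V)⟩ := by
    intro n
    induction n with
    | zero =>
        intro S hS
        have hSu : S = Finset.univ := by
          have : Finset.univ \ S = ∅ := Finset.card_eq_zero.1 (Nat.le_zero.1 hS)
          have h2 : (Finset.univ : Finset V) ⊆ S := by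
            intro x hx
            by_contra hxS
            have : x ∈ Finset.univ \ S := Finset.mem_sdiff.2 ⟨hx, hxS⟩
            simp [this] at *
            simp_all
          exact Finset.eq_univ_iff_forall.2 (fun x => h2 (Finset.mem_univ x)) ▸ rfl
        subst hSu
        exact ⟨[], Run.nil _⟩
    | succ n ih =>
        intro S hS
        by_cases hSu : S = Finset.univ
        · subst hSu; exact ⟨[], Run.nil _⟩
        have hne : {x : V | x ∈ Finset.univ \ S}.Nonempty := by
          have h2 : (Finset.univ \ S).Nonempty := by
            rw [Finset.sdiff_nonempty]
            intro hsub
            exact hSu (Finset.univ_subset_iff.1 hsub)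
          obtain ⟨x, hx⟩ := h2
          exact ⟨x, hx⟩
        obtain ⟨v, hv, hmin⟩ := hwf.has_min _ hne
        have hvS : v ∉ S := (Finset.mem_sdiff.1 hv).2
        have hP : ∀ u, E u v → u ∈ S := by
          intro u hu
          by_contra h
          exact hmin u (Finset.mem_sdiff.2 ⟨Finset.mem_univ u, h⟩) (Relation.TransGen.single hu)
        set P : Finset V := Finset.univ.filter (fun u => E u v) with hPdef
        have hPcard : P.card ≤ maxInDeg E := by
          rw [hPdef]
          unfold maxInDeg
          exact Finset.le_sup (f := fun w => (Finset.univ.filter fun u => E u w).card)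
            (Finset.mem_univ v)
        have hPr : P.card ≤ r := le_trans (le_trans hPcard (Nat.le_succ _)) hr
        have hPr1 : (insert v P).card ≤ r :=
          le_trans (Finset.card_insert_le v P) (le_trans (Nat.add_le_add_right hPcard 1) hr)
        -- C0 = ⟨fun _ => ∅, S⟩
        have hC0 : Valid r (⟨fun _ => ∅, S⟩ : Conf V k) := fun j => by simp
        -- loads
        have hload := run_loads (E := E) (r := r) j0 P.toList ⟨fun _ => ∅, S⟩ hC0
          (fun u hu => hP u (Finset.mem_filter.1 (Finset.mem_toList.1 hu)).2)
          (by simpa [Finset.toList_toFinset] using hPr)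
        have hC1eq : (⟨Function.update (fun _ : Fin k => (∅ : Finset V)) j0
              ((fun _ : Fin k => (∅ : Finset V)) j0 ∪ P.toList.toFinset), S⟩ : Conf V k)
            = ⟨Function.update (fun _ : Fin k => (∅ : Finset V)) j0 P, S⟩ := by
          refine conf_ext ?_ rfl
          simp [Finset.toList_toFinset]
        rw [hC1eq] at hload
        set C1 : Conf V k := ⟨Function.update (fun _ : Fin k => (∅ : Finset V)) j0 P, S⟩
          with hC1def
        have hC1red : C1.red j0 = P := by simp [hC1def]
        have hC1valid : Valid r C1 := by
          intro j
          by_cases h : j = j0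
          · subst h; simpa [hC1def] using hPr
          · simp [hC1def, Function.update_of_ne h]
        -- compute move
        have hlegc : Legal E C1 (Move.compute 1 (fun _ => j0) (fun _ => v)) := by
          refine ⟨hk, injective_one, fun _ u hu => ?_⟩
          rw [hC1red]
          exact Finset.mem_filter.2 ⟨Finset.mem_univ u, hu⟩
        have happc : apply (Move.compute 1 (fun _ => j0) (fun _ => v)) C1
            = ⟨Function.update (fun _ : Fin k => (∅ : Finset V)) j0 (insert v P), S⟩ := by
          refine conf_ext ?_ rfl
          rw [show (apply (Move.compute 1 (fun _ => j0) (fun _ => v)) C1).red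
              = addRed C1 (fun _ : Fin 1 => j0) (fun _ => v) from rfl,
            addRed_single, hC1red, hC1def]
          simp [Function.update_idem]
        set C2 : Conf V k := ⟨Function.update (fun _ : Fin k => (∅ : Finset V)) j0
            (insert v P), S⟩ with hC2def
        have hC2valid : Valid r C2 := by
          intro j
          by_cases h : j = j0
          · subst h; simpa [hC2def] using hPr1
          · simp [hC2def, Function.update_of_ne h]
        -- save move
        have hlegs : Legal E C2 (Move.save 1 (fun _ => j0) (fun _ => v)) := by
          refine ⟨hk, injective_one, fun _ => ?_⟩
          simp [hC2def]
        have happs : apply (Move.save 1 (fun _ => j0) (fun _ => v)) C2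
            = ⟨C2.red, insert v S⟩ := by
          refine conf_ext rfl ?_
          show C2.blue ∪ Finset.univ.image (fun _ : Fin 1 => v) = insert v S
          rw [Finset.image_const Finset.univ_nonempty, hC2def, union_singleton']
        set C3 : Conf V k := ⟨C2.red, insert v S⟩ with hC3def
        have hC3valid : Valid r C3 := fun j => hC2valid j
        -- removes
        have hrem := run_removes (E := E) (r := r) j0 (insert v P).toList C3 hC3valid
        have hC4eq : (⟨Function.update C3.red j0 (C3.red j0 \ (insert v P).toList.toFinset),
              C3.blue⟩ : Conf V k)
            = ⟨fun _ => ∅, insert v S⟩ := by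
          refine conf_ext ?_ rfl
          funext j
          by_cases h : j = j0
          · subst h
            simp [hC3def, hC2def, Finset.toList_toFinset]
          · simp [Function.update_of_ne h, hC3def, hC2def, Function.update_of_ne h]
        rw [hC4eq] at hrem
        -- recurse
        have hcard' : (Finset.univ \ insert v S).card ≤ n := by
          have hvmem : v ∈ Finset.univ \ S := hv
          have heq : Finset.univ \ insert v S = (Finset.univ \ S).erase v := by
            ext x; simp [Finset.mem_erase, and_comm] <;> tauto
          rw [heq, Finset.card_erase_of_mem hvmem]
          omega
        obtain ⟨ms', hrun'⟩ := ih (insert v S) hcard'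
        refine ⟨P.toList.map (fun u => Move.load 1 (fun _ => j0) (fun _ => u))
            ++ (Move.compute 1 (fun _ => j0) (fun _ => v)
            :: Move.save 1 (fun _ => j0) (fun _ => v)
            :: ((insert v P).toList.map (Move.removeRed j0) ++ ms')), ?_⟩
        refine run_append hload ?_
        refine Run.cons hlegc (by rw [happc]; exact hC2valid) ?_
        rw [happc]
        show Run E r C2 _ _
        refine Run.cons hlegs (by rw [happs]; exact hC3valid) ?_
        rw [happs]
        show Run E r C3 _ _
        exact run_append hrem hrun'
  obtain ⟨ms, hrun⟩ := key (Finset.univ \ (∅ : Finset V)).card ∅ le_rfl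
  exact ⟨ms, ⟨⟨fun _ => ∅, Finset.univ⟩, hrun, fun v _ => Or.inl (Finset.mem_univ v)⟩⟩

/-- The union of all processors' red sets. -/
def simRed (C : Conf V k) : Finset V := Finset.univ.biUnion C.red

/-- The single-processor configuration simulating `C`. -/
def simC (C : Conf V k) : Conf V 1 := ⟨fun _ => simRed C, C.blue⟩

lemma mem_simRed {C : Conf V k} {u : V} {j : Fin k} (h : u ∈ C.red j) : u ∈ simRed C :=
  Finset.mem_biUnion.2 ⟨j, Finset.mem_univ j, h⟩

lemma simRed_card {C : Conf V k} (hC : Valid r C) : (simRed C).card ≤ k * r := by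
  refine le_trans Finset.card_biUnion_le ?_
  calc ∑ j, (C.red j).card ≤ ∑ _j : Fin k, r := Finset.sum_le_sum fun j _ => hC j
    _ = k * r := by simp [Finset.sum_const, Finset.card_univ]

lemma simRed_addRed {C : Conf V k} {m : ℕ} (f : Fin m → Fin k) (v : Fin m → V) :
    Finset.univ.biUnion (addRed C f v) = simRed C ∪ Finset.univ.image v := by
  ext x
  simp only [simRed, addRed, Finset.mem_biUnion, Finset.mem_union, Finset.mem_image,
    Finset.mem_filter, Finset.mem_univ, true_and]
  constructor
  · rintro ⟨j, hj | ⟨i, hfi, hvi⟩⟩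
    · exact Or.inl ⟨j, hj⟩
    · exact Or.inr ⟨i, hvi⟩
  · rintro (⟨j, hj⟩ | ⟨i, hvi⟩)
    · exact ⟨j, Or.inl hj⟩
    · exact ⟨f i, Or.inr ⟨i, rfl, hvi⟩⟩

lemma ofFn_toFinset {m : ℕ} (v : Fin m → V) :
    (List.ofFn v).toFinset = Finset.univ.image v := by
  ext x; simp [List.mem_ofFn]

lemma sim_step {C : Conf V k} {mv : Move V k} (hC : Valid r C) (hleg : Legal E C mv)
    (hval : Valid r (apply mv C)) :
    ∃ ms1 : List (Move V 1), Run E (k * r) (simC C) ms1 (simC (apply mv C)) ∧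
      cost g ms1 ≤ k * moveCost g mv := by
  have hvC : Valid (k * r) (simC C) := fun _ => simRed_card hC
  cases mv with
  | save m f v =>
      obtain ⟨hm, _, hmem⟩ := hleg
      refine ⟨(List.ofFn v).map (fun u => Move.save 1 (fun _ => (0 : Fin 1)) (fun _ => u)),
        ?_, ?_⟩
      · have hrun := run_saves (E := E) (r := k * r) (0 : Fin 1) (List.ofFn v) (simC C) hvC
          (fun u hu => by
            obtain ⟨i, rfl⟩ := List.mem_ofFn.1 hu
            exact mem_simRed (hmem i))
        have heq : (⟨(simC C).red, (simC C).blue ∪ (List.ofFn v).toFinset⟩ : Conf V 1)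
            = simC (apply (Move.save m f v) C) := by
          refine conf_ext rfl ?_
          show C.blue ∪ (List.ofFn v).toFinset = C.blue ∪ Finset.univ.image v
          rw [ofFn_toFinset]
        rw [← heq]
        exact hrun
      · rw [cost_map (List.ofFn v)
            (fun u => Move.save 1 (fun _ => (0 : Fin 1)) (fun _ => u)) g (fun u => rfl),
          List.length_ofFn]
        exact Nat.mul_le_mul_right g hm
  | load m f v =>
      obtain ⟨hm, _, hmem⟩ := hleg
      have hredeq : simRed C ∪ (List.ofFn v).toFinset
          = Finset.univ.biUnion (addRed C f v) := by
        rw [ofFn_toFinset, simRed_addRed]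
      refine ⟨(List.ofFn v).map (fun u => Move.load 1 (fun _ => (0 : Fin 1)) (fun _ => u)),
        ?_, ?_⟩
      · have hcard : ((simC C).red 0 ∪ (List.ofFn v).toFinset).card ≤ k * r := by
          show (simRed C ∪ (List.ofFn v).toFinset).card ≤ k * r
          rw [hredeq]
          exact simRed_card (C := apply (Move.load m f v) C) hval
        have hrun := run_loads (E := E) (r := k * r) (0 : Fin 1) (List.ofFn v) (simC C) hvC
          (fun u hu => by
            obtain ⟨i, rfl⟩ := List.mem_ofFn.1 hu
            exact hmem i) hcard
        have heq : (⟨Function.update (simC C).red 0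
              ((simC C).red 0 ∪ (List.ofFn v).toFinset), (simC C).blue⟩ : Conf V 1)
            = simC (apply (Move.load m f v) C) := by
          refine conf_ext (funext fun j => ?_) rfl
          have hj : j = 0 := Subsingleton.elim j 0
          subst hj
          show Function.update (simC C).red 0
              ((simC C).red 0 ∪ (List.ofFn v).toFinset) 0
            = Finset.univ.biUnion (addRed C f v)
          rw [Function.update_self]
          exact hredeq
        rw [← heq]
        exact hrun
      · rw [cost_map (List.ofFn v)
            (fun u => Move.load 1 (fun _ => (0 : Fin 1)) (fun _ => u)) g (fun u => rfl),
          List.length_ofFn]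
        exact Nat.mul_le_mul_right g hm
  | compute m f v =>
      obtain ⟨hm, _, hmem⟩ := hleg
      have hredeq : simRed C ∪ (List.ofFn v).toFinset
          = Finset.univ.biUnion (addRed C f v) := by
        rw [ofFn_toFinset, simRed_addRed]
      refine ⟨(List.ofFn v).map (fun u => Move.compute 1 (fun _ => (0 : Fin 1)) (fun _ => u)),
        ?_, ?_⟩
      · have hcard : ((simC C).red 0 ∪ (List.ofFn v).toFinset).card ≤ k * r := by
          show (simRed C ∪ (List.ofFn v).toFinset).card ≤ k * r
          rw [hredeq]
          exact simRed_card (C := apply (Move.compute m f v) C) hval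
        have hrun := run_computes (E := E) (r := k * r) (0 : Fin 1) (List.ofFn v) (simC C) hvC
          (fun u hu w hw => by
            obtain ⟨i, rfl⟩ := List.mem_ofFn.1 hu
            exact mem_simRed (hmem i w hw)) hcard
        have heq : (⟨Function.update (simC C).red 0
              ((simC C).red 0 ∪ (List.ofFn v).toFinset), (simC C).blue⟩ : Conf V 1)
            = simC (apply (Move.compute m f v) C) := by
          refine conf_ext (funext fun j => ?_) rfl
          have hj : j = 0 := Subsingleton.elim j 0
          subst hj
          show Function.update (simC C).red 0
              ((simC C).red 0 ∪ (List.ofFn v).toFinset) 0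
            = Finset.univ.biUnion (addRed C f v)
          rw [Function.update_self]
          exact hredeq
        rw [← heq]
        exact hrun
      · rw [cost_map (List.ofFn v)
            (fun u => Move.compute 1 (fun _ => (0 : Fin 1)) (fun _ => u)) 1 (fun u => rfl),
          List.length_ofFn]
        simpa [moveCost] using hm
  | removeRed j x =>
      have hsub : simRed (apply (Move.removeRed j x) C) ⊆ simRed C := by
        intro y hy
        obtain ⟨j', _, hj'⟩ := Finset.mem_biUnion.1 hy
        by_cases h : j' = j
        · subst h
          rw [show (apply (Move.removeRed j' x) C).red j'
              = C.red j' \ {x} from by simp [apply]] at hj'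
          exact mem_simRed (Finset.mem_sdiff.1 hj').1
        · rw [show (apply (Move.removeRed j x) C).red j'
              = C.red j' from by simp [apply, Function.update_of_ne h]] at hj'
          exact mem_simRed hj'
      have hmem2 : ∀ y ∈ simRed C, y ≠ x → y ∈ simRed (apply (Move.removeRed j x) C) := by
        intro y hy hyx
        obtain ⟨j', _, hj'⟩ := Finset.mem_biUnion.1 hy
        refine Finset.mem_biUnion.2 ⟨j', Finset.mem_univ j', ?_⟩
        by_cases h : j' = j
        · subst h
          rw [show (apply (Move.removeRed j' x) C).red j'
              = C.red j' \ {x} from by simp [apply]]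
          exact Finset.mem_sdiff.2 ⟨hj', by simp [hyx]⟩
        · rw [show (apply (Move.removeRed j x) C).red j'
              = C.red j' from by simp [apply, Function.update_of_ne h]]
          exact hj'
      by_cases hx : x ∈ simRed (apply (Move.removeRed j x) C)
      · have hAeq : simRed (apply (Move.removeRed j x) C) = simRed C := by
          refine Finset.Subset.antisymm hsub ?_
          intro y hy
          by_cases h : y = x
          · subst h; exact hx
          · exact hmem2 y hy h
        have : simC C = simC (apply (Move.removeRed j x) C) := by
          refine conf_ext ?_ rfl
          funext j'
          exact hAeq.symm
        exact ⟨[], this ▸ Run.nil (simC C), by simp [cost]⟩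
      · have hAeq : simRed (apply (Move.removeRed j x) C) = simRed C \ {x} := by
          ext y
          constructor
          · intro hy
            refine Finset.mem_sdiff.2 ⟨hsub hy, ?_⟩
            simp only [Finset.mem_singleton]
            rintro rfl
            exact hx hy
          · intro hy
            obtain ⟨hy1, hy2⟩ := Finset.mem_sdiff.1 hy
            exact hmem2 y hy1 (by simpa using hy2)
        refine ⟨[Move.removeRed (0 : Fin 1) x], ?_, by simp [cost, moveCost]⟩
        have happ : apply (Move.removeRed (0 : Fin 1) x) (simC C)
            = simC (apply (Move.removeRed j x) C) := by
          refine conf_ext ?_ rfl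
          funext j'
          have : j' = 0 := Subsingleton.elim j' 0
          subst this
          rw [show (apply (Move.removeRed (0 : Fin 1) x) (simC C)).red 0
              = (simC C).red 0 \ {x} from by simp [apply]]
          show simRed C \ {x} = simRed (apply (Move.removeRed j x) C)
          exact hAeq.symm
        have hval1 : Valid (k * r) (apply (Move.removeRed (0 : Fin 1) x) (simC C)) := by
          rw [happ]
          intro j'
          show (simRed (apply (Move.removeRed j x) C)).card ≤ k * r
          exact le_trans (Finset.card_le_card hsub) (simRed_card hC)
        exact Run.cons trivial hval1 (happ ▸ Run.nil _)
  | removeBlue x =>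
      refine ⟨[Move.removeBlue x], ?_, by simp [cost, moveCost]⟩
      have happ : apply (Move.removeBlue x) (simC C) = simC (apply (Move.removeBlue x) C) :=
        rfl
      have hval1 : Valid (k * r) (apply (Move.removeBlue x) (simC C)) := by
        rw [happ]
        intro j'
        exact simRed_card hC
      exact Run.cons trivial hval1 (happ ▸ Run.nil _)

lemma sim_run : ∀ {C C' : Conf V k} {ms : List (Move V k)}, Valid r C → Run E r C ms C' →
    ∃ ms1 : List (Move V 1), Run E (k * r) (simC C) ms1 (simC C') ∧
      cost g ms1 ≤ k * cost g ms := by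
  intro C C' ms hC hrun
  induction hrun with
  | nil C => exact ⟨[], Run.nil _, by simp [cost]⟩
  | cons hleg hval hrest ih =>
      obtain ⟨ms1, hr1, hc1⟩ := sim_step hC hleg hval
      obtain ⟨ms2, hr2, hc2⟩ := ih hval
      refine ⟨ms1 ++ ms2, run_append hr1 hr2, ?_⟩
      rw [cost_append, cost_cons, Nat.mul_add]
      exact Nat.add_le_add hc1 hc2

end Aux

end MPP

/-- For every finite DAG `G` and all `k, r, g ∈ ℤ⁺` with
`r ≥ Δ_in + 1`: the optimal MPP cost with 1 processor and memory bound `k·r` is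
at most `k` times the optimal MPP cost with `k` processors and memory bound `r`
per processor (fair comparison: `OPT⁽ᵏ⁾/OPT⁽¹⁾ ≥ 1/k`). -/
theorem stmt7 {V : Type} [Fintype V] [DecidableEq V] (E : V → V → Prop)
    (hdag : IsDag E) (k r g : ℕ) (hk : 0 < k) (hr0 : 0 < r) (hg : 0 < g)
    (hr : MPP.maxInDeg E + 1 ≤ r) :
    MPP.optCost E 1 (k * r) g ≤ k * MPP.optCost E k r g := by
  classical
  obtain ⟨ms0, hpeb0⟩ := MPP.exists_pebbling (E := E) (r := r) hdag hk hr
  have hne : {c | ∃ ms : List (MPP.Move V k), MPP.IsPebbling E r ms ∧ MPP.cost g ms = c}.Nonempty :=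
    ⟨MPP.cost g ms0, ms0, hpeb0, rfl⟩
  obtain ⟨ms, hpeb, hcost⟩ := Nat.sInf_mem hne
  obtain ⟨Cf, hrun, hterm⟩ := hpeb
  have hC0 : MPP.Valid r (MPP.init V k) := fun j => by simp [MPP.init]
  obtain ⟨ms1, hrun1, hcost1⟩ := MPP.sim_run (g := g) hC0 hrun
  have hinit : MPP.simC (MPP.init V k) = MPP.init V 1 := by
    refine MPP.conf_ext ?_ rfl
    funext j
    show Finset.univ.biUnion (fun _ : Fin k => (∅ : Finset V)) = ∅
    ext x; simp
  rw [hinit] at hrun1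
  have hterm1 : MPP.Terminal E (MPP.simC Cf) := by
    intro v hv
    rcases hterm v hv with h | ⟨j, hj⟩
    · exact Or.inl h
    · exact Or.inr ⟨0, MPP.mem_simRed hj⟩
  have hpeb1 : MPP.IsPebbling E (k * r) ms1 := ⟨MPP.simC Cf, hrun1, hterm1⟩
  have h1 : MPP.optCost E 1 (k * r) g ≤ MPP.cost g ms1 :=
    Nat.sInf_le ⟨ms1, hpeb1, rfl⟩
  calc MPP.optCost E 1 (k * r) g ≤ MPP.cost g ms1 := h1
    _ ≤ k * MPP.cost g ms := hcost1
    _ = k * MPP.optCost E k r g := by rw [hcost]; rfl
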